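/- Let α be a measurable space and β a standard Borel space, μ a probability measure on α, κ a Markov kernel from α to β, and ν a probability measure on β such that ν ≪ κ(a) for μ-almost every a. Let w : α × β → [0,∞) be a jointly measurable version of the Radon–Nikodym derivative, w(a, b) = (dν/dκ(a))(b). Let g : α × β → ℝ be bounded and measurable. Then, under the measure μ ⊗ κ on α × β (the composition of μ with the kernel κ), the conditional expectation of the function (a, b) ↦ w(a, b)·g(a, b) given the σ-algebra generated by the first projection equals (a, b) ↦ ∫_β g(a, b′) dν(b′) almost everywhere. In particular E_{μ⊗κ}[w·g] = ∫_α ∫_β g(a, b′) dν(b′) dμ(a). (This is the one-period unbiasedness identity E[w_t^F · N_B(Y_t) | H̄_{t−1}*] = N_{Bt}(F, L) showing that the weighted IPW error is a martingale difference sequence.) -/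

import Mathlib

open MeasureTheory ProbabilityTheory

/-- One-period unbiasedness identity for the importance weight: under `μ ⊗ₘ κ`, the
conditional expectation of `w · g` given the σ-algebra generated by the first
projection is `(a, b) ↦ ∫ g(a, b′) dν(b′)`, where `w` is a jointly measurable version
of the Radon–Nikodym derivative `dν/dκ(a)`; in particular the expectations match. -/
theorem stmt_1
    {α β : Type*} [MeasurableSpace α] [MeasurableSpace β] [StandardBorelSpace β]
    (μ : Measure α) [IsProbabilityMeasure μ]
    (κ : Kernel α β) [IsMarkovKernel κ]
    (ν : Measure β) [IsProbabilityMeasure ν]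
    (hac : ∀ᵐ a ∂μ, ν ≪ κ a)
    (w : α × β → ℝ) (hw_meas : Measurable w) (hw_nonneg : ∀ p, 0 ≤ w p)
    (hw : ∀ᵐ a ∂μ, (fun b => ENNReal.ofReal (w (a, b))) =ᵐ[κ a] ν.rnDeriv (κ a))
    (g : α × β → ℝ) (hg_meas : Measurable g) (Cg : ℝ) (hg_bdd : ∀ p, |g p| ≤ Cg) :
    ((μ ⊗ₘ κ)[fun p => w p * g p|
        MeasurableSpace.comap (Prod.fst : α × β → α) inferInstance]
      =ᵐ[μ ⊗ₘ κ] fun p => ∫ b', g (p.1, b') ∂ν)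
    ∧ ∫ p, w p * g p ∂(μ ⊗ₘ κ) = ∫ a, ∫ b', g (a, b') ∂ν ∂μ := by
  -- Pointwise a.e. version of `w` as the real Radon–Nikodym derivative
  have hw' : ∀ᵐ a ∂μ, (fun b => w (a, b))
      =ᵐ[κ a] fun b => (ν.rnDeriv (κ a) b).toReal := by
    filter_upwards [hw] with a ha
    filter_upwards [ha] with b hb
    rw [← hb, ENNReal.toReal_ofReal (hw_nonneg _)]
  -- a.e. in a, `w (a, ·)` is integrable w.r.t. `κ a` with integral 1
  have hw_int : ∀ᵐ a ∂μ, Integrable (fun b => w (a, b)) (κ a) := by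
    filter_upwards [hw'] with a ha
    exact (Measure.integrable_toReal_rnDeriv).congr ha.symm
  have hw_integral : ∀ᵐ a ∂μ, ∫ b, w (a, b) ∂(κ a) = 1 := by
    filter_upwards [hw', hac] with a ha hac_a
    rw [integral_congr_ae ha, Measure.integral_toReal_rnDeriv hac_a]
    simp
  -- key pointwise identity
  have hkey : ∀ᵐ a ∂μ, ∫ b, w (a, b) * g (a, b) ∂(κ a) = ∫ b', g (a, b') ∂ν := by
    filter_upwards [hw', hac] with a ha hac_a
    have : ∫ b, w (a, b) * g (a, b) ∂(κ a)
        = ∫ b, (ν.rnDeriv (κ a) b).toReal • g (a, b) ∂(κ a) := by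
      refine integral_congr_ae ?_
      filter_upwards [ha] with b hb
      rw [hb, smul_eq_mul]
    rw [this, integral_rnDeriv_smul hac_a]
  -- integrability of w on μ ⊗ₘ κ
  have hw_int2 : Integrable w (μ ⊗ₘ κ) := by
    rw [Measure.integrable_compProd_iff hw_meas.aestronglyMeasurable]
    refine ⟨hw_int, ?_⟩
    refine (integrable_const (1 : ℝ)).congr ?_
    filter_upwards [hw_integral] with a ha
    have : (fun b => ‖w (a, b)‖) = fun b => w (a, b) := by
      funext b; exact Real.norm_of_nonneg (hw_nonneg _)
    rw [this, ha]
  -- integrability of w * g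
  have hf_int : Integrable (fun p => w p * g p) (μ ⊗ₘ κ) := by
    have : Integrable (fun p => g p * w p) (μ ⊗ₘ κ) :=
      hw_int2.bdd_mul (c := Cg) hg_meas.aestronglyMeasurable
        (Filter.Eventually.of_forall fun p => by rw [Real.norm_eq_abs]; exact hg_bdd p)
    simpa [mul_comm] using this
  -- the candidate conditional expectation
  set H : α → ℝ := fun a => ∫ b', g (a, b') ∂ν with hH
  have hH_sm : StronglyMeasurable H :=
    hg_meas.stronglyMeasurable.integral_prod_right'
  have hH_bdd : ∀ a, ‖H a‖ ≤ Cg := by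
    intro a
    calc ‖H a‖ ≤ ∫ b', ‖g (a, b')‖ ∂ν := norm_integral_le_integral_norm _
    _ ≤ ∫ _, Cg ∂ν := by
        refine integral_mono_of_nonneg (Filter.Eventually.of_forall fun b => norm_nonneg _)
          (integrable_const _) (Filter.Eventually.of_forall fun b => ?_)
        simpa [Real.norm_eq_abs] using hg_bdd (a, b)
    _ = Cg := by simp
  have hh_int : Integrable (fun p : α × β => H p.1) (μ ⊗ₘ κ) := by
    refine Integrable.mono' (integrable_const Cg)
      ((hH_sm.comp_measurable measurable_fst).aestronglyMeasurable)
      (Filter.Eventually.of_forall fun p => hH_bdd p.1)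
  have hm : MeasurableSpace.comap (Prod.fst : α × β → α) inferInstance
      ≤ (inferInstance : MeasurableSpace (α × β)) := measurable_fst.comap_le
  -- pointwise key integral over sets
  have hset : ∀ t : Set α, MeasurableSet t →
      ∫ p in (Prod.fst : α × β → α) ⁻¹' t, H p.1 ∂(μ ⊗ₘ κ)
        = ∫ p in (Prod.fst : α × β → α) ⁻¹' t, w p * g p ∂(μ ⊗ₘ κ) := by
    intro t ht
    have hpre : (Prod.fst : α × β → α) ⁻¹' t = t ×ˢ Set.univ := by
      ext p; simp
    rw [hpre,
      Measure.setIntegral_compProd ht MeasurableSet.univ hf_int.integrableOn,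
      Measure.setIntegral_compProd ht MeasurableSet.univ hh_int.integrableOn]
    refine setIntegral_congr_ae ht ?_
    filter_upwards [hkey] with a ha _
    simp only [Measure.restrict_univ]
    rw [ha, integral_const]
    simp [hH]
  have hcond : (fun p : α × β => H p.1)
      =ᵐ[μ ⊗ₘ κ] (μ ⊗ₘ κ)[fun p => w p * g p|
        MeasurableSpace.comap (Prod.fst : α × β → α) inferInstance] := by
    refine ae_eq_condExp_of_forall_setIntegral_eq hm hf_int
      (fun s _ _ => hh_int.integrableOn) ?_ ?_
    · rintro s ⟨t, ht, rfl⟩ _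
      exact hset t ht
    · exact StronglyMeasurable.aestronglyMeasurable
        (hH_sm.comp_measurable (measurable_iff_comap_le.mpr le_rfl))
  constructor
  · exact hcond.symm
  · rw [Measure.integral_compProd hf_int]
    exact integral_congr_ae hkey
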